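/- Let 1 ≤ p ≤ ∞ and 1 < q < ∞. A weight ω belongs to A_p(ℝⁿ) ∩ RH_q(ℝⁿ) if and only if ω^q belongs to A_{q(p-1)+1}(ℝⁿ). -/

import Mathlib

open MeasureTheory Metric Set ENNReal

/-- Average of an `ℝ≥0∞`-valued function over the axis-parallel cube
`closedBall c r` (sup-norm ball) in `ℝⁿ`. -/
noncomputable def avgE (n : ℕ) (f : (Fin n → ℝ) → ℝ≥0∞) (c : Fin n → ℝ) (r : ℝ) : ℝ≥0∞ :=
  (volume (closedBall c r))⁻¹ * ∫⁻ x in closedBall c r, f x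

/-- A weight on `ℝⁿ`: measurable, a.e. positive and locally integrable. -/
def IsWeight (n : ℕ) (ω : (Fin n → ℝ) → ℝ≥0∞) : Prop :=
  Measurable ω ∧ (∀ᵐ x ∂(volume : Measure (Fin n → ℝ)), 0 < ω x) ∧
    ∀ (c : Fin n → ℝ) (r : ℝ), 0 < r → (∫⁻ x in closedBall c r, ω x) < ⊤

/-- The Muckenhoupt class `A_p(ℝⁿ)` for a real exponent `1 ≤ p < ∞`, with the
usual modification when `p = 1`. -/
noncomputable def MemAp (n : ℕ) (p : ℝ) (ω : (Fin n → ℝ) → ℝ≥0∞) : Prop :=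
  if p = 1 then
    ∃ C : ℝ≥0∞, C ≠ ⊤ ∧ ∀ (c : Fin n → ℝ) (r : ℝ), 0 < r →
      ∀ᵐ y ∂(volume.restrict (closedBall c r)), avgE n ω c r ≤ C * ω y
  else
    ∃ C : ℝ≥0∞, C ≠ ⊤ ∧ ∀ (c : Fin n → ℝ) (r : ℝ), 0 < r →
      avgE n ω c r * (avgE n (fun x => ω x ^ (1 - p / (p - 1))) c r) ^ (p - 1) ≤ C

/-- The Muckenhoupt class `A_p(ℝⁿ)` for `1 ≤ p ≤ ∞`; when `p = ∞` this is
`A_∞(ℝⁿ) = ⋃_{r ≥ 1} A_r(ℝⁿ)`. -/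
noncomputable def MemApE (n : ℕ) (p : ℝ≥0∞) (ω : (Fin n → ℝ) → ℝ≥0∞) : Prop :=
  if p = ⊤ then ∃ r : ℝ, 1 ≤ r ∧ MemAp n r ω else MemAp n p.toReal ω

/-- The reverse Hölder class `RH_q(ℝⁿ)` for a finite real exponent `q > 1`. -/
def MemRH (n : ℕ) (q : ℝ) (ω : (Fin n → ℝ) → ℝ≥0∞) : Prop :=
  ∃ C : ℝ≥0∞, C ≠ ⊤ ∧ ∀ (c : Fin n → ℝ) (r : ℝ), 0 < r →
    (avgE n (fun x => ω x ^ q) c r) ^ (1 / q) ≤ C * avgE n ω c r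

namespace Stmt3Aux

variable {n : ℕ}

lemma volQ_pos (c : Fin n → ℝ) {r : ℝ} (hr : 0 < r) : 0 < volume (closedBall c r) :=
  measure_closedBall_pos _ _ hr

lemma volQ_ne_top (c : Fin n → ℝ) (r : ℝ) : volume (closedBall c r) ≠ ⊤ :=
  (isCompact_closedBall c r).measure_lt_top.ne

lemma avg_mono {f g : (Fin n → ℝ) → ℝ≥0∞} {c : Fin n → ℝ} {r : ℝ}
    (h : ∀ᵐ x ∂(volume.restrict (closedBall c r)), f x ≤ g x) :
    avgE n f c r ≤ avgE n g c r :=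
  mul_le_mul_right (lintegral_mono_ae h) _

lemma le_avg_const {f : (Fin n → ℝ) → ℝ≥0∞} {c : Fin n → ℝ} {r : ℝ} (hr : 0 < r) {a : ℝ≥0∞}
    (h : ∀ᵐ y ∂(volume.restrict (closedBall c r)), a ≤ f y) : a ≤ avgE n f c r := by
  have h1 : a * volume (closedBall c r) ≤ ∫⁻ x in closedBall c r, f x := by
    rw [← setLIntegral_const]
    exact lintegral_mono_ae h
  calc a = (volume (closedBall c r))⁻¹ * (a * volume (closedBall c r)) := by
        rw [mul_comm a, ← mul_assoc,
          ENNReal.inv_mul_cancel (volQ_pos c hr).ne' (volQ_ne_top c r), one_mul]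
    _ ≤ avgE n f c r := mul_le_mul_right h1 _

lemma avg_le_avg_rpow {f : (Fin n → ℝ) → ℝ≥0∞} (hf : Measurable f) (c : Fin n → ℝ) {r : ℝ}
    (hr : 0 < r) {t : ℝ} (ht : 1 < t) :
    avgE n f c r ≤ (avgE n (fun x => f x ^ t) c r) ^ (1/t) := by
  have hconj : t.HolderConjugate (t/(t-1)) := Real.HolderConjugate.conjExponent ht
  set V := volume (closedBall c r) with hV
  have hV0 : V ≠ 0 := (volQ_pos c hr).ne'
  have hVt : V ≠ ⊤ := volQ_ne_top c r
  have hH := ENNReal.lintegral_mul_le_Lp_mul_Lq (volume.restrict (closedBall c r)) hconj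
    hf.aemeasurable (aemeasurable_const (b := (1 : ℝ≥0∞)))
  simp only [Pi.mul_apply, mul_one, ENNReal.one_rpow, setLIntegral_one] at hH
  have h2 : avgE n f c r ≤ V⁻¹ * ((∫⁻ x in closedBall c r, f x ^ t) ^ (1/t) * V ^ (1/(t/(t-1)))) :=
    mul_le_mul_right hH _
  have hexp : (-1 : ℝ) + 1/(t/(t-1)) = -(1/t) := by
    have ht0 : t ≠ 0 := by linarith
    have ht1 : t - 1 ≠ 0 := by intro h; linarith [sub_eq_zero.mp h]
    field_simp
    ring
  calc avgE n f c r
      ≤ V⁻¹ * ((∫⁻ x in closedBall c r, f x ^ t) ^ (1/t) * V ^ (1/(t/(t-1)))) := h2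
    _ = (V ^ (-1 : ℝ) * V ^ (1/(t/(t-1)))) * (∫⁻ x in closedBall c r, f x ^ t) ^ (1/t) := by
        rw [ENNReal.rpow_neg_one]; ring
    _ = (V⁻¹) ^ (1/t) * (∫⁻ x in closedBall c r, f x ^ t) ^ (1/t) := by
        rw [← ENNReal.rpow_add _ _ hV0 hVt, hexp, ← ENNReal.rpow_neg_one,
          ← ENNReal.rpow_mul]
        norm_num
    _ = (avgE n (fun x => f x ^ t) c r) ^ (1/t) := by
        rw [avgE, ENNReal.mul_rpow_of_nonneg _ _ (by positivity : (0:ℝ) ≤ 1/t)]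


lemma meas_rpow {ω : (Fin n → ℝ) → ℝ≥0∞} (hm : Measurable ω) (t : ℝ) :
    Measurable fun x => ω x ^ t :=
  ENNReal.continuous_rpow_const.measurable.comp hm

abbrev IsWeight' (n : ℕ) (ω : (Fin n → ℝ) → ℝ≥0∞) : Prop := IsWeight n ω

lemma supp_conull {ω : (Fin n → ℝ) → ℝ≥0∞}
    (hpos : ∀ᵐ x ∂(volume : Measure (Fin n → ℝ)), 0 < ω x) :
    (volume : Measure (Fin n → ℝ)) (Function.support ω)ᶜ = 0 := by
  rw [ae_iff] at hpos
  refine measure_mono_null ?_ hpos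
  intro x hx
  simp only [Function.mem_support, mem_compl_iff, not_not] at hx
  simp [hx]

lemma avg_pos {ω : (Fin n → ℝ) → ℝ≥0∞} (hω : IsWeight' n ω) (c : Fin n → ℝ) {r : ℝ}
    (hr : 0 < r) : 0 < avgE n ω c r := by
  obtain ⟨hm, hpos, _⟩ := hω
  have hVt : volume (closedBall c r) ≠ ⊤ := volQ_ne_top c r
  have hsupp : 0 < ∫⁻ x in closedBall c r, ω x := by
    rw [lintegral_pos_iff_support hm, Measure.restrict_apply
      (measurableSet_support hm), inter_comm, measure_inter_conull (supp_conull hpos)]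
    exact volQ_pos c hr
  exact ENNReal.mul_pos (by simp [hVt]) hsupp.ne'

lemma avg_ne_top {ω : (Fin n → ℝ) → ℝ≥0∞} (hω : IsWeight' n ω) (c : Fin n → ℝ) {r : ℝ}
    (hr : 0 < r) : avgE n ω c r ≠ ⊤ :=
  ENNReal.mul_ne_top (by simp [(volQ_pos c hr).ne']) (hω.2.2 c r hr).ne

/-- Hölder pairing: `1 ≤ (avg ω) * (avg ω^{-1/(p-1)})^{p-1}` for `p > 1`. -/
lemma one_le_pair {ω : (Fin n → ℝ) → ℝ≥0∞} (hω : IsWeight' n ω) (c : Fin n → ℝ) {r : ℝ}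
    (hr : 0 < r) {pR : ℝ} (hpR : 1 < pR) :
    1 ≤ avgE n ω c r * (avgE n (fun x => ω x ^ (-(pR - 1)⁻¹)) c r) ^ (pR - 1) := by
  obtain ⟨hm, hpos, hloc⟩ := hω
  set V := volume (closedBall c r) with hVdef
  have hV0 : V ≠ 0 := (volQ_pos c hr).ne'
  have hVt : V ≠ ⊤ := volQ_ne_top c r
  have hconj : pR.HolderConjugate (pR/(pR-1)) := Real.HolderConjugate.conjExponent hpR
  have hp0 : pR ≠ 0 := by linarith
  have hp1 : pR - 1 ≠ 0 := by intro h; linarith [sub_eq_zero.mp h]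
  have hfin : ∀ᵐ x ∂(volume.restrict (closedBall c r)), ω x < ⊤ :=
    ae_lt_top hm (hloc c r hr).ne
  have hH := ENNReal.lintegral_mul_le_Lp_mul_Lq (volume.restrict (closedBall c r)) hconj
    ((meas_rpow hm (1/pR)).aemeasurable) ((meas_rpow hm (-(1/pR))).aemeasurable)
  have hfg : ∀ᵐ x ∂(volume.restrict (closedBall c r)),
      ((fun x => ω x ^ (1/pR)) * fun x => ω x ^ (-(1/pR))) x = 1 := by
    filter_upwards [ae_restrict_of_ae hpos, hfin] with x hx1 hx2
    simp only [Pi.mul_apply]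
    rw [← ENNReal.rpow_add _ _ hx1.ne' hx2.ne]
    simp
  rw [lintegral_congr_ae hfg] at hH
  simp only [lintegral_one, Measure.restrict_apply_univ] at hH
  have e1 : ∀ x : ℝ≥0∞, (x ^ (1/pR)) ^ pR = x := by
    intro x; rw [← ENNReal.rpow_mul]
    rw [one_div, inv_mul_cancel₀ hp0, ENNReal.rpow_one]
  have e2 : ∀ x : ℝ≥0∞, (x ^ (-(1/pR))) ^ (pR/(pR-1)) = x ^ (-(pR-1)⁻¹) := by
    intro x; rw [← ENNReal.rpow_mul]
    congr 1
    field_simp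
  simp only [e1, e2] at hH
  have hsum : 1/pR + 1/(pR/(pR-1)) = 1 := by
    have h : pR⁻¹ + (pR/(pR-1))⁻¹ = 1 := by simpa only [inv_one] using hconj.inv_add_inv_eq_inv
    rw [one_div, one_div]; linarith
  have hsplit : (V⁻¹ : ℝ≥0∞) = (V⁻¹) ^ (1/pR) * (V⁻¹) ^ (1/(pR/(pR-1))) := by
    rw [← ENNReal.rpow_add _ _ (by simp [hVt]) (by simp [hV0]), hsum, ENNReal.rpow_one]
  have key : 1 ≤ (avgE n ω c r) ^ (1/pR) *
      (avgE n (fun x => ω x ^ (-(pR-1)⁻¹)) c r) ^ (1/(pR/(pR-1))) := by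
    calc (1:ℝ≥0∞) = V⁻¹ * V := (ENNReal.inv_mul_cancel hV0 hVt).symm
      _ ≤ V⁻¹ * ((∫⁻ x in closedBall c r, ω x) ^ (1/pR) *
            (∫⁻ x in closedBall c r, ω x ^ (-(pR-1)⁻¹)) ^ (1/(pR/(pR-1)))) :=
          mul_le_mul_right hH _
      _ = ((V⁻¹) ^ (1/pR) * (∫⁻ x in closedBall c r, ω x) ^ (1/pR)) *
            ((V⁻¹) ^ (1/(pR/(pR-1))) * (∫⁻ x in closedBall c r, ω x ^ (-(pR-1)⁻¹))
              ^ (1/(pR/(pR-1)))) := by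
          nth_rewrite 1 [hsplit]
          ring
      _ = _ := by
          rw [avgE, avgE, ENNReal.mul_rpow_of_nonneg _ _ (by positivity : (0:ℝ) ≤ 1/pR),
            ENNReal.mul_rpow_of_nonneg _ _
              (le_of_lt (one_div_pos.mpr (div_pos (by linarith) (by linarith))))]
  have hkey2 := ENNReal.rpow_le_rpow key (by linarith : (0:ℝ) ≤ pR)
  rw [ENNReal.one_rpow, ENNReal.mul_rpow_of_nonneg _ _ (by linarith : (0:ℝ) ≤ pR),
    ← ENNReal.rpow_mul, ← ENNReal.rpow_mul] at hkey2
  have ea : 1/pR * pR = 1 := by field_simp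
  have eb : 1/(pR/(pR-1)) * pR = pR - 1 := by
    rw [one_div_div, div_mul_cancel₀ _ hp0]
  rw [ea, eb, ENNReal.rpow_one] at hkey2
  exact hkey2


lemma of_le_mul {c x w : ℝ≥0∞} (hc0 : c ≠ 0) (hct : c ≠ ⊤) (h : x ≤ c * w) : c⁻¹ * x ≤ w := by
  calc c⁻¹ * x ≤ c⁻¹ * (c * w) := mul_le_mul_right h _
    _ = w := by rw [← mul_assoc, ENNReal.inv_mul_cancel hc0 hct, one_mul]

/-- The core real-exponent equivalence. -/
lemma core {n : ℕ} {ω : (Fin n → ℝ) → ℝ≥0∞} (hω : IsWeight n ω) {q : ℝ} (hq : 1 < q)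
    {pR : ℝ} (hpR : 1 ≤ pR) :
    (MemAp n pR ω ∧ MemRH n q ω) ↔ MemAp n (q * (pR - 1) + 1) (fun x => ω x ^ q) := by
  have hm : Measurable ω := hω.1
  have hq0 : (0:ℝ) < q := by linarith
  have hq0' : q ≠ 0 := hq0.ne'
  have hmq : Measurable fun x => ω x ^ q := meas_rpow hm q
  rcases eq_or_lt_of_le hpR with hpR1 | hpR1
  · -- case pR = 1
    subst hpR1
    have hs : q * ((1:ℝ) - 1) + 1 = 1 := by ring
    rw [hs]
    simp only [MemAp, if_pos rfl]
    constructor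
    · rintro ⟨⟨C1, hC1, h1⟩, C2, hC2, h2⟩
      refine ⟨((C2 + 1) * (C1 + 1)) ^ q, ENNReal.rpow_ne_top_of_nonneg hq0.le
        (ENNReal.mul_ne_top (by simp [hC2]) (by simp [hC1])), fun c r hr => ?_⟩
      filter_upwards [h1 c r hr] with y hy
      have hrh := h2 c r hr
      have step : (avgE n (fun x => ω x ^ q) c r) ^ (1/q) ≤ (C2 + 1) * (C1 + 1) * ω y := by
        calc (avgE n (fun x => ω x ^ q) c r) ^ (1/q) ≤ C2 * avgE n ω c r := hrh
          _ ≤ (C2 + 1) * ((C1 + 1) * ω y) :=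
              mul_le_mul' le_self_add (hy.trans (mul_le_mul_left le_self_add _))
          _ = (C2 + 1) * (C1 + 1) * ω y := by ring
      have h3 := ENNReal.rpow_le_rpow step hq0.le
      rw [← ENNReal.rpow_mul, one_div, inv_mul_cancel₀ hq0', ENNReal.rpow_one,
        ENNReal.mul_rpow_of_nonneg _ _ hq0.le] at h3
      exact h3
    · rintro ⟨C, hC, h⟩
      set C0 : ℝ≥0∞ := C + 1 with hC0def
      have hC0t : C0 ≠ ⊤ := by simp [hC0def, hC]
      have hC00 : C0 ≠ 0 := by simp [hC0def]
      have hCq0 : C0 ^ (1/q) ≠ 0 := by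
        simp [ENNReal.rpow_eq_zero_iff, hC00, hC0t]
      have hCqt : C0 ^ (1/q) ≠ ⊤ := ENNReal.rpow_ne_top_of_nonneg (by positivity) hC0t
      have h' : ∀ (c : Fin n → ℝ) (r : ℝ), 0 < r →
          ∀ᵐ y ∂(volume.restrict (closedBall c r)),
            (avgE n (fun x => ω x ^ q) c r) ^ (1/q) ≤ C0 ^ (1/q) * ω y := by
        intro c r hr
        filter_upwards [h c r hr] with y hy
        have hy' : avgE n (fun x => ω x ^ q) c r ≤ C0 * ω y ^ q :=
          hy.trans (mul_le_mul_left le_self_add _)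
        calc (avgE n (fun x => ω x ^ q) c r) ^ (1/q) ≤ (C0 * ω y ^ q) ^ (1/q) :=
              ENNReal.rpow_le_rpow hy' (by positivity)
          _ = C0 ^ (1/q) * ω y := by
              rw [ENNReal.mul_rpow_of_nonneg _ _ (by positivity : (0:ℝ) ≤ 1/q),
                ← ENNReal.rpow_mul, mul_one_div_cancel hq0', ENNReal.rpow_one]
      refine ⟨⟨C0 ^ (1/q), hCqt, fun c r hr => ?_⟩, C0 ^ (1/q), hCqt, fun c r hr => ?_⟩
      · filter_upwards [h' c r hr] with y hy
        exact (avg_le_avg_rpow hm c hr hq).trans hy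
      · have ha : (C0 ^ (1/q))⁻¹ * (avgE n (fun x => ω x ^ q) c r) ^ (1/q) ≤
            avgE n ω c r := by
          refine le_avg_const hr ?_
          filter_upwards [h' c r hr] with y hy
          exact of_le_mul hCq0 hCqt hy
        calc (avgE n (fun x => ω x ^ q) c r) ^ (1/q)
            = C0 ^ (1/q) * ((C0 ^ (1/q))⁻¹ * (avgE n (fun x => ω x ^ q) c r) ^ (1/q)) := by
              rw [← mul_assoc, ENNReal.mul_inv_cancel hCq0 hCqt, one_mul]
          _ ≤ C0 ^ (1/q) * avgE n ω c r := mul_le_mul_right ha _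
  · -- case pR > 1
    have hp1 : pR - 1 ≠ 0 := by intro h; linarith [sub_eq_zero.mp h]
    have hs1 : (0:ℝ) < pR - 1 := by linarith
    have hpRne : pR ≠ 1 := by intro h; simp [h] at hs1
    have hsne : q * (pR - 1) + 1 ≠ 1 := by
      intro h
      nlinarith
    have ef1 : (fun x => ω x ^ (1 - pR / (pR - 1))) = (fun x => ω x ^ (-(pR - 1)⁻¹)) := by
      funext x; congr 1; field_simp; ring
    have ef2 : (fun x => ((fun x => ω x ^ q) x) ^
          (1 - (q * (pR - 1) + 1) / (q * (pR - 1))))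
        = (fun x => ω x ^ (-(pR - 1)⁻¹)) := by
      funext x
      rw [← ENNReal.rpow_mul]
      congr 1
      field_simp
      ring
    have hsexp : (q * (pR - 1) + 1) - 1 = q * (pR - 1) := by ring
    rw [MemAp, MemAp, if_neg hpRne, if_neg hsne]
    simp only [hsexp, ef1, ef2]
    set σ := fun x => ω x ^ (-(pR - 1)⁻¹) with hσdef
    constructor
    · rintro ⟨⟨C1, hC1t, h1⟩, C2, hC2t, h2⟩
      refine ⟨(C2 + 1) ^ q * (C1 + 1) ^ q,
        ENNReal.mul_ne_top (ENNReal.rpow_ne_top_of_nonneg hq0.le (by simp [hC2t]))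
          (ENNReal.rpow_ne_top_of_nonneg hq0.le (by simp [hC1t])), fun c r hr => ?_⟩
      have hrh : avgE n (fun x => ω x ^ q) c r ≤ (C2 + 1) ^ q * (avgE n ω c r) ^ q := by
        have step : (avgE n (fun x => ω x ^ q) c r) ^ (1/q) ≤ (C2 + 1) * avgE n ω c r :=
          (h2 c r hr).trans (mul_le_mul_left le_self_add _)
        have h3 := ENNReal.rpow_le_rpow step hq0.le
        rwa [← ENNReal.rpow_mul, one_div, inv_mul_cancel₀ hq0', ENNReal.rpow_one,
          ENNReal.mul_rpow_of_nonneg _ _ hq0.le] at h3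
      calc avgE n (fun x => ω x ^ q) c r * (avgE n σ c r) ^ (q * (pR - 1))
          ≤ (C2 + 1) ^ q * (avgE n ω c r) ^ q * (avgE n σ c r) ^ (q * (pR - 1)) :=
            mul_le_mul_left hrh _
        _ = (C2 + 1) ^ q * (avgE n ω c r * (avgE n σ c r) ^ (pR - 1)) ^ q := by
            rw [ENNReal.mul_rpow_of_nonneg _ _ hq0.le, ← ENNReal.rpow_mul,
              mul_comm (pR - 1) q, mul_assoc]
        _ ≤ (C2 + 1) ^ q * (C1 + 1) ^ q :=
            mul_le_mul_right (ENNReal.rpow_le_rpow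
              ((h1 c r hr).trans le_self_add) hq0.le) _
    · rintro ⟨C, hCt, h⟩
      set C0 : ℝ≥0∞ := C + 1 with hC0def
      have hC0t : C0 ≠ ⊤ := by simp [hC0def, hCt]
      have hCqt : C0 ^ (1/q) ≠ ⊤ := ENNReal.rpow_ne_top_of_nonneg (by positivity) hC0t
      have h' : ∀ (c : Fin n → ℝ) (r : ℝ), 0 < r →
          avgE n (fun x => ω x ^ q) c r * (avgE n σ c r) ^ (q * (pR - 1)) ≤ C0 :=
        fun c r hr => (h c r hr).trans le_self_add
      refine ⟨⟨C0 ^ (1/q), hCqt, fun c r hr => ?_⟩, C0 ^ (1/q), hCqt, fun c r hr => ?_⟩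
      · -- A_p
        have hJ : avgE n ω c r ≤ (avgE n (fun x => ω x ^ q) c r) ^ (1/q) :=
          avg_le_avg_rpow hm c hr hq
        have hexp : q * (pR - 1) * (1/q) = pR - 1 := by field_simp
        calc avgE n ω c r * (avgE n σ c r) ^ (pR - 1)
            ≤ (avgE n (fun x => ω x ^ q) c r) ^ (1/q) * (avgE n σ c r) ^ (pR - 1) :=
              mul_le_mul_left hJ _
          _ = (avgE n (fun x => ω x ^ q) c r * (avgE n σ c r) ^ (q * (pR - 1))) ^ (1/q) := by
              rw [ENNReal.mul_rpow_of_nonneg _ _ (by positivity : (0:ℝ) ≤ 1/q),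
                ← ENNReal.rpow_mul, hexp]
          _ ≤ C0 ^ (1/q) := ENNReal.rpow_le_rpow (h' c r hr) (by positivity)
      · -- RH
        have hpair := one_le_pair hω c hr hpR1
        have hA0 : avgE n ω c r ≠ 0 := (avg_pos hω c hr).ne'
        have hAt : avgE n ω c r ≠ ⊤ := avg_ne_top hω c hr
        have hEA : (avgE n ω c r)⁻¹ ≤ (avgE n σ c r) ^ (pR - 1) := by
          calc (avgE n ω c r)⁻¹ = (avgE n ω c r)⁻¹ * 1 := (mul_one _).symm
            _ ≤ (avgE n ω c r)⁻¹ * (avgE n ω c r * (avgE n σ c r) ^ (pR - 1)) :=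
                mul_le_mul_right hpair _
            _ = (avgE n σ c r) ^ (pR - 1) := by
                rw [← mul_assoc, ENNReal.inv_mul_cancel hA0 hAt, one_mul]
        have h3 : ((avgE n σ c r) ^ (pR - 1)) ^ q = (avgE n σ c r) ^ (q * (pR - 1)) := by
          rw [← ENNReal.rpow_mul, mul_comm]
        have h4 : avgE n (fun x => ω x ^ q) c r * ((avgE n ω c r)⁻¹) ^ q ≤ C0 := by
          calc avgE n (fun x => ω x ^ q) c r * ((avgE n ω c r)⁻¹) ^ q
              ≤ avgE n (fun x => ω x ^ q) c r * (avgE n σ c r) ^ (q * (pR - 1)) := by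
                rw [← h3]
                exact mul_le_mul_right (ENNReal.rpow_le_rpow hEA hq0.le) _
            _ ≤ C0 := h' c r hr
        have h5 : avgE n (fun x => ω x ^ q) c r ≤ C0 * (avgE n ω c r) ^ q := by
          calc avgE n (fun x => ω x ^ q) c r
              = avgE n (fun x => ω x ^ q) c r * ((avgE n ω c r)⁻¹) ^ q
                  * (avgE n ω c r) ^ q := by
                rw [mul_assoc, ← ENNReal.mul_rpow_of_nonneg _ _ hq0.le,
                  ENNReal.inv_mul_cancel hA0 hAt, ENNReal.one_rpow, mul_one]
            _ ≤ C0 * (avgE n ω c r) ^ q := mul_le_mul_left h4 _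
        have h6 := ENNReal.rpow_le_rpow h5 (by positivity : (0:ℝ) ≤ 1/q)
        rwa [ENNReal.mul_rpow_of_nonneg _ _ (by positivity : (0:ℝ) ≤ 1/q),
          ← ENNReal.rpow_mul, mul_one_div_cancel hq0', ENNReal.rpow_one] at h6

end Stmt3Aux

open Stmt3Aux in
/-- For `1 ≤ p ≤ ∞` and `1 < q < ∞`: `ω ∈ A_p(ℝⁿ) ∩ RH_q(ℝⁿ)` iff
`ω^q ∈ A_{q(p-1)+1}(ℝⁿ)`. -/
theorem stmt3 (n : ℕ) (p : ℝ≥0∞) (q : ℝ) (hp : 1 ≤ p) (hq : 1 < q)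
    (ω : (Fin n → ℝ) → ℝ≥0∞) (hω : IsWeight n ω) :
    (MemApE n p ω ∧ MemRH n q ω) ↔
      MemApE n (ENNReal.ofReal q * (p - 1) + 1) (fun x => ω x ^ q) := by
  have hq0 : (0:ℝ) < q := by linarith
  have hq0' : q ≠ 0 := hq0.ne'
  by_cases hptop : p = ⊤
  · subst hptop
    have hofq : ENNReal.ofReal q ≠ 0 := by
      simp only [ne_eq, ENNReal.ofReal_eq_zero, not_le]; linarith
    have hE : ENNReal.ofReal q * ((⊤:ℝ≥0∞) - 1) + 1 = ⊤ := by
      rw [ENNReal.top_sub ENNReal.one_ne_top, ENNReal.mul_top hofq]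
      simp
    rw [hE, MemApE, MemApE, if_pos rfl, if_pos rfl]
    constructor
    · rintro ⟨⟨r0, hr0, hA⟩, hRH⟩
      refine ⟨q * (r0 - 1) + 1, by nlinarith, ?_⟩
      exact (core hω hq hr0).mp ⟨hA, hRH⟩
    · rintro ⟨r0, hr0, hA⟩
      set pR := (r0 - 1) / q + 1 with hpRdef
      have hpR : 1 ≤ pR := by
        have : 0 ≤ (r0 - 1) / q := div_nonneg (by linarith) hq0.le
        simp [hpRdef]; linarith
      have hid : q * (pR - 1) + 1 = r0 := by
        simp only [hpRdef]
        field_simp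
        ring
      have := (core hω hq hpR).mpr (by rw [hid]; exact hA)
      exact ⟨⟨pR, hpR, this.1⟩, this.2⟩
  · have hpt1 : 1 ≤ p.toReal := by
      have h1 := ENNReal.toReal_mono hptop hp
      simpa using h1
    have hfin : ENNReal.ofReal q * (p - 1) + 1 ≠ ⊤ := by
      refine ENNReal.add_ne_top.mpr ⟨ENNReal.mul_ne_top ENNReal.ofReal_ne_top ?_,
        ENNReal.one_ne_top⟩
      exact ENNReal.sub_ne_top hptop
    have htr : (ENNReal.ofReal q * (p - 1) + 1).toReal = q * (p.toReal - 1) + 1 := by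
      rw [ENNReal.toReal_add (ENNReal.mul_ne_top ENNReal.ofReal_ne_top
          (ENNReal.sub_ne_top hptop)) ENNReal.one_ne_top,
        ENNReal.toReal_mul, ENNReal.toReal_ofReal hq0.le,
        ENNReal.toReal_sub_of_le hp hptop, ENNReal.toReal_one]
    rw [MemApE, MemApE, if_neg hptop, if_neg hfin, htr]
    exact core hω hq hpt1
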